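/- (Theorem 1: PARGS may score a prefix of the optimal sequence below another prefix.) There exist a nonempty finite type τ, n : ℕ, an index i with 0 < i < n, four pairwise distinct lists y*, y', y'', y''' over τ of length n with y*.take (i−1) = y'.take (i−1), y*.take i ≠ y'.take i, and y*.take i = y''.take i = y'''.take i, and a preference dataset D consisting of the three pairs (y*, y'), (y', y''), (y', y''') such that: (a) every reward r : List τ → ℝ consistent with D (meaning r w > r l for each pair (w, l) ∈ D) satisfies r y* > r y for y ∈ {y', y'', y'''}, so y* is the unique optimal response among the dataset responses; (b) P_D(y*.take i ≻ y'.take i) = 1/3; and (c) every V : List τ → ℝ satisfying σ(V (y*.take i) − V (y'.take i)) = P_D(y*.take i ≻ y'.take i) has V (y*.take i) < V (y'.take i). -/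

import Mathlib

/-- The logistic (sigmoid) function `σ(z) = 1 / (1 + exp (−z))`. -/
noncomputable def logistic (z : ℝ) : ℝ := 1 / (1 + Real.exp (-z))

open Classical in
/-- Number of pairs `(w, l)` in the preference dataset `D` that are relevant to
`(p1, p2)`: `p1` is a prefix of one of `w, l` and `p2` is a prefix of the other. -/
noncomputable def relCount {τ : Type*} (D : List (List τ × List τ)) (p1 p2 : List τ) : ℕ :=
  (D.map (fun wl =>
    if (p1 <+: wl.1 ∧ p2 <+: wl.2) ∨ (p1 <+: wl.2 ∧ p2 <+: wl.1) then 1 else 0)).sum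

open Classical in
/-- Number of pairs `(w, l)` in the preference dataset `D` with `p1` a prefix of the
winning response `w` and `p2` a prefix of the losing response `l`. -/
noncomputable def winCount {τ : Type*} (D : List (List τ × List τ)) (p1 p2 : List τ) : ℕ :=
  (D.map (fun wl => if p1 <+: wl.1 ∧ p2 <+: wl.2 then 1 else 0)).sum

/-- Empirical preference probability `P_D(p1 ≻ p2)`. -/
noncomputable def empProb {τ : Type*} (D : List (List τ × List τ)) (p1 p2 : List τ) : ℝ :=
  (winCount D p1 p2 : ℝ) / (relCount D p1 p2 : ℝ)

/-- Theorem 1 (PARGS may score a prefix of the optimal sequence below another prefix):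
there are a nonempty finite vocabulary `τ`, a length `n`, an index `0 < i < n`, four
pairwise distinct full sequences `y*, y', y'', y'''` of length `n` with
`y*.take (i−1) = y'.take (i−1)`, `y*.take i ≠ y'.take i`, and
`y*.take i = y''.take i = y'''.take i`, and a preference dataset
`D = [(y*, y'), (y', y''), (y', y''')]` such that (a) every reward `r` consistent with
`D` ranks `y*` strictly above `y'`, `y''` and `y'''` (so `y*` is the unique optimal
response among the dataset responses), (b) `P_D(y*.take i ≻ y'.take i) = 1/3`, and
(c) every `V` with `σ(V (y*.take i) − V (y'.take i)) = P_D(y*.take i ≻ y'.take i)`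
satisfies `V (y*.take i) < V (y'.take i)`. -/
theorem pargs_counterexample :
    ∃ (τ : Type) (_ : Fintype τ) (_ : Nonempty τ) (n i : ℕ)
      (ystar y' y'' y''' : List τ) (D : List (List τ × List τ)),
      0 < i ∧ i < n ∧
      ystar.length = n ∧ y'.length = n ∧ y''.length = n ∧ y'''.length = n ∧
      ystar ≠ y' ∧ ystar ≠ y'' ∧ ystar ≠ y''' ∧ y' ≠ y'' ∧ y' ≠ y''' ∧ y'' ≠ y''' ∧
      ystar.take (i - 1) = y'.take (i - 1) ∧ ystar.take i ≠ y'.take i ∧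
      ystar.take i = y''.take i ∧ ystar.take i = y'''.take i ∧
      D = [(ystar, y'), (y', y''), (y', y''')] ∧
      (∀ r : List τ → ℝ, (∀ wl ∈ D, r wl.2 < r wl.1) →
        r y' < r ystar ∧ r y'' < r ystar ∧ r y''' < r ystar) ∧
      empProb D (ystar.take i) (y'.take i) = 1 / 3 ∧
      (∀ V : List τ → ℝ,
        logistic (V (ystar.take i) - V (y'.take i)) = empProb D (ystar.take i) (y'.take i) →
        V (ystar.take i) < V (y'.take i)) := by

  refine ⟨Fin 3, inferInstance, ⟨0⟩, 2, 1, [0, 0], [1, 0], [0, 1], [0, 2],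
    [([0, 0], [1, 0]), ([1, 0], [0, 1]), ([1, 0], [0, 2])],
    one_pos, one_lt_two, rfl, rfl, rfl, rfl, by decide, by decide, by decide, by decide,
    by decide, by decide, rfl, by decide, rfl, rfl, rfl, ?_, ?_, ?_⟩
  · intro r hr
    have h1 := hr ([0,0],[1,0]) (by simp)
    have h2 := hr ([1,0],[0,1]) (by simp)
    have h3 := hr ([1,0],[0,2]) (by simp)
    simp at h1 h2 h3
    exact ⟨h1, h2.trans h1, h3.trans h1⟩
  · have hw : winCount [(([0, 0] : List (Fin 3)), [1, 0]), ([1, 0], [0, 1]), ([1, 0], [0, 2])]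
        [0] [1] = 1 := by
      simp [winCount, if_pos, if_neg, show ([0] : List (Fin 3)) <+: [0,0] ∧ ([1] : List (Fin 3)) <+: [1,0] from by decide,
        show ¬(([0] : List (Fin 3)) <+: [1,0] ∧ ([1] : List (Fin 3)) <+: [0,1]) from by decide,
        show ¬(([0] : List (Fin 3)) <+: [1,0] ∧ ([1] : List (Fin 3)) <+: [0,2]) from by decide]
    have hrel : relCount [(([0, 0] : List (Fin 3)), [1, 0]), ([1, 0], [0, 1]), ([1, 0], [0, 2])]
        [0] [1] = 3 := by
      simp [relCount,
        show (([0] : List (Fin 3)) <+: [0,0] ∧ ([1] : List (Fin 3)) <+: [1,0]) ∨ (([0] : List (Fin 3)) <+: [1,0] ∧ ([1] : List (Fin 3)) <+: [0,0]) from by decide,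
        show (([0] : List (Fin 3)) <+: [1,0] ∧ ([1] : List (Fin 3)) <+: [0,1]) ∨ (([0] : List (Fin 3)) <+: [0,1] ∧ ([1] : List (Fin 3)) <+: [1,0]) from by decide,
        show (([0] : List (Fin 3)) <+: [1,0] ∧ ([1] : List (Fin 3)) <+: [0,2]) ∨ (([0] : List (Fin 3)) <+: [0,2] ∧ ([1] : List (Fin 3)) <+: [1,0]) from by decide]
    simp [empProb, hw, hrel]
  · intro V hV
    simp only [show (List.take 1 [0,0] : List (Fin 3)) = [0] from rfl,
      show (List.take 1 [1,0] : List (Fin 3)) = [1] from rfl] at hV ⊢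
    have hw : logistic (V [0] - V [1]) = 1 / 3 := by
      rw [hV]
      have hw : winCount [(([0, 0] : List (Fin 3)), [1, 0]), ([1, 0], [0, 1]), ([1, 0], [0, 2])]
          [0] [1] = 1 := by
        simp [winCount, show ([0] : List (Fin 3)) <+: [0,0] ∧ ([1] : List (Fin 3)) <+: [1,0] from by decide,
          show ¬(([0] : List (Fin 3)) <+: [1,0] ∧ ([1] : List (Fin 3)) <+: [0,1]) from by decide,
          show ¬(([0] : List (Fin 3)) <+: [1,0] ∧ ([1] : List (Fin 3)) <+: [0,2]) from by decide]
      have hrel : relCount [(([0, 0] : List (Fin 3)), [1, 0]), ([1, 0], [0, 1]), ([1, 0], [0, 2])]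
          [0] [1] = 3 := by
        simp [relCount,
          show (([0] : List (Fin 3)) <+: [0,0] ∧ ([1] : List (Fin 3)) <+: [1,0]) ∨ (([0] : List (Fin 3)) <+: [1,0] ∧ ([1] : List (Fin 3)) <+: [0,0]) from by decide,
          show (([0] : List (Fin 3)) <+: [1,0] ∧ ([1] : List (Fin 3)) <+: [0,1]) ∨ (([0] : List (Fin 3)) <+: [0,1] ∧ ([1] : List (Fin 3)) <+: [1,0]) from by decide,
          show (([0] : List (Fin 3)) <+: [1,0] ∧ ([1] : List (Fin 3)) <+: [0,2]) ∨ (([0] : List (Fin 3)) <+: [0,2] ∧ ([1] : List (Fin 3)) <+: [1,0]) from by decide]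
      simp [empProb, hw, hrel]
    set d := V [0] - V [1] with hd
    have hpos : (0 : ℝ) < 1 + Real.exp (-d) := by positivity
    have h3 : 1 + Real.exp (-d) = 3 := by
      unfold logistic at hw
      field_simp at hw
      linarith
    have hexp : Real.exp (-d) = 2 := by linarith
    have : -d = Real.log 2 := by rw [← hexp, Real.log_exp]
    have : 0 < -d := this ▸ Real.log_pos one_lt_two
    have : d < 0 := by linarith
    linarith
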